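/- Let K be a number field, let n ≥ 12, and let q be a non-degenerate anisotropic quadratic form on Kⁿ. Let γ be an element of the orthogonal group O_q(K), and let a,b,c ∈ Kⁿ be non-isotropic vectors (q(a), q(b), q(c) ≠ 0) such that q(a) = q(b) = q(c) and ⟨a, γa⟩ = ⟨a, c⟩ = ⟨b, c⟩, where ⟨·,·⟩ is the polar bilinear form of q. Then there exists δ ∈ (gcl_{O_q(K)}(γ))², the set of products of two elements of the generalized conjugacy class of γ, such that δa = b. -/

import Mathlib

open Pointwise

/-- The orthogonal group of a quadratic form `Q`, as a subgroup of the general linear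
group: the invertible linear automorphisms preserving `Q`. -/
def orthogonalSubgroup {K V : Type*} [Field K] [AddCommGroup V] [Module K V]
    (Q : QuadraticForm K V) : Subgroup (LinearMap.GeneralLinearGroup K V) where
  carrier := {g | ∀ v : V, Q ((g : V →ₗ[K] V) v) = Q v}
  one_mem' := by
    intro v
    rw [Units.val_one, Module.End.one_apply]
  mul_mem' := by
    intro g h hg hh v
    rw [Units.val_mul, Module.End.mul_apply, hg, hh]
  inv_mem' := by
    intro g hg v
    have h1 : (↑g : V →ₗ[K] V) ((↑g⁻¹ : V →ₗ[K] V) v) = v := by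
      rw [← Module.End.mul_apply, g.mul_inv, Module.End.one_apply]
    conv_rhs => rw [← h1]
    exact (hg _).symm

/-- The generalized conjugacy class of `g`: the union of the conjugacy class of `g`,
the conjugacy class of `g⁻¹`, and `{1}`. -/
def gcl {G : Type*} [Group G] (g : G) : Set G :=
  {x | x = 1 ∨ ∃ h : G, x = h * g * h⁻¹ ∨ x = h * g⁻¹ * h⁻¹}

section Aux

open QuadraticMap

variable {K V : Type*} [Field K] [AddCommGroup V] [Module K V] (Q : QuadraticForm K V)

/-- The reflection in the vector `v`. -/
noncomputable def qrefl (v : V) : V →ₗ[K] V :=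
  LinearMap.id - LinearMap.smulRight ((Q v)⁻¹ • ((QuadraticMap.polarBilin Q).flip v)) v

lemma qrefl_apply (v x : V) :
    qrefl Q v x = x - ((Q v)⁻¹ * polar ⇑Q x v) • v := by
  simp [qrefl, LinearMap.sub_apply, LinearMap.smulRight_apply, LinearMap.smul_apply,
    LinearMap.flip_apply, smul_smul]

lemma q_add (x y : V) : Q (x + y) = Q x + Q y + polar ⇑Q x y := by
  simp [polar]

lemma q_sub (x y : V) : Q (x - y) = Q x + Q y - polar ⇑Q x y := by
  rw [sub_eq_add_neg, q_add, ← neg_one_smul K y, polar_smul_right, QuadraticMap.map_smul]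
  ring_nf

lemma qrefl_isom (v : V) (hv : Q v ≠ 0) (x : V) : Q (qrefl Q v x) = Q x := by
  rw [qrefl_apply, q_sub, QuadraticMap.map_smul, polar_smul_right, smul_eq_mul]
  field_simp
  have e : Q v * (polar (⇑Q) x v / Q v) = polar (⇑Q) x v := by field_simp
  rw [smul_eq_mul, ← mul_assoc, e]; ring

lemma qrefl_fix (v z : V) (hz : polar ⇑Q z v = 0) : qrefl Q v z = z := by
  rw [qrefl_apply, hz, mul_zero, zero_smul, sub_zero]

lemma qrefl_invol (v : V) (hv : Q v ≠ 0) (x : V) : qrefl Q v (qrefl Q v x) = x := by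
  rw [qrefl_apply, qrefl_apply, polar_sub_left, polar_smul_left, polar_self, smul_eq_mul, two_nsmul]
  have key : (Q v)⁻¹ * (polar (⇑Q) x v - (Q v)⁻¹ * polar (⇑Q) x v * (Q v + Q v))
      = -((Q v)⁻¹ * polar (⇑Q) x v) := by field_simp; ring
  rw [key, neg_smul, sub_neg_eq_add, sub_add_cancel]

lemma qrefl_map (x y : V) (hq : Q x = Q y) (hv : Q (x - y) ≠ 0) : qrefl Q (x - y) x = y := by
  rw [qrefl_apply]
  have h1 : polar ⇑Q x (x - y) = Q (x - y) := by
    rw [polar_sub_right, polar_self, q_sub, polar_comm, hq]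
    rw [two_nsmul]
  rw [h1, inv_mul_cancel₀ hv, one_smul]
  abel

/-- Application of an element of the orthogonal group to a vector. -/
def oap (g : orthogonalSubgroup Q) (x : V) : V :=
  ((g : LinearMap.GeneralLinearGroup K V) : V →ₗ[K] V) x

lemma oap_mul (g h : orthogonalSubgroup Q) (x : V) : oap Q (g * h) x = oap Q g (oap Q h x) := by
  simp only [oap, Subgroup.coe_mul, Units.val_mul, Module.End.mul_apply]

lemma oap_one (x : V) : oap Q (1 : orthogonalSubgroup Q) x = x := by
  simp only [oap, OneMemClass.coe_one, Units.val_one, Module.End.one_apply]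

lemma oap_inv_oap (g : orthogonalSubgroup Q) (x : V) : oap Q g⁻¹ (oap Q g x) = x := by
  rw [← oap_mul, inv_mul_cancel, oap_one]

lemma oap_q (g : orthogonalSubgroup Q) (x : V) : Q (oap Q g x) = Q x := g.2 x

lemma oap_polar (g : orthogonalSubgroup Q) (u v : V) :
    polar ⇑Q (oap Q g u) (oap Q g v) = polar ⇑Q u v := by
  have hadd : oap Q g u + oap Q g v = oap Q g (u + v) := (map_add _ u v).symm
  simp only [polar, hadd, oap_q]

/-- Witt-style step for anisotropic forms: an involution mapping `x` to `y` and fixing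
the orthogonal complement of `x - y`. -/
lemma exists_oelt (hanis : Q.Anisotropic) (x y : V) (hq : Q x = Q y) :
    ∃ g : orthogonalSubgroup Q, g * g = 1 ∧ oap Q g x = y ∧
      ∀ z : V, polar ⇑Q z (x - y) = 0 → oap Q g z = z := by
  by_cases hxy : x = y
  · exact ⟨1, one_mul 1, by rw [oap_one, hxy], fun z _ => oap_one Q z⟩
  · have hv : Q (x - y) ≠ 0 := fun h0 => hxy (sub_eq_zero.mp (hanis _ h0))
    set v := x - y with hvdef
    have hinv : ∀ w, qrefl Q v (qrefl Q v w) = w := qrefl_invol Q v hv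
    set u : LinearMap.GeneralLinearGroup K V :=
      ⟨qrefl Q v, qrefl Q v, LinearMap.ext hinv, LinearMap.ext hinv⟩ with hu
    have hmem : u ∈ orthogonalSubgroup Q := fun w => qrefl_isom Q v hv w
    refine ⟨⟨u, hmem⟩, ?_, ?_, ?_⟩
    · ext1; ext1
      exact LinearMap.ext hinv
    · exact qrefl_map Q x y hq hv
    · intro z hz
      exact qrefl_fix Q v z hz

end Aux

theorem stmt13 {K : Type*} [Field K] [NumberField K] {n : ℕ} (hn : 12 ≤ n)
    (Q : QuadraticForm K (Fin n → K))
    (hanis : Q.Anisotropic)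
    (hnondeg : ∀ u : Fin n → K, (∀ v, QuadraticMap.polar ⇑Q u v = 0) → u = 0)
    (γ : orthogonalSubgroup Q) (a b c : Fin n → K)
    (ha : Q a ≠ 0) (hb : Q b ≠ 0) (hc : Q c ≠ 0)
    (hab : Q a = Q b) (hac : Q a = Q c)
    (h1 : QuadraticMap.polar ⇑Q a
        (((γ : LinearMap.GeneralLinearGroup K (Fin n → K)) : (Fin n → K) →ₗ[K] (Fin n → K)) a)
      = QuadraticMap.polar ⇑Q a c)
    (h2 : QuadraticMap.polar ⇑Q a c = QuadraticMap.polar ⇑Q b c) :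
    ∃ δ ∈ (gcl γ) ^ 2,
      (((δ : orthogonalSubgroup Q) : LinearMap.GeneralLinearGroup K (Fin n → K))
        : (Fin n → K) →ₗ[K] (Fin n → K)) a = b := by
  have h1' : QuadraticMap.polar ⇑Q a (oap Q γ a) = QuadraticMap.polar ⇑Q a c := h1
  -- σ maps γa to c and fixes a
  obtain ⟨σ, hσ2, hσmap, hσfix⟩ := exists_oelt Q hanis (oap Q γ a) c
    (by rw [oap_q, hac.symm])
  have hσa : oap Q σ a = a := hσfix a (by rw [QuadraticMap.polar_sub_right, h1', sub_self])
  have hσinv : σ⁻¹ = σ := inv_eq_of_mul_eq_one_right hσ2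
  -- δ₁ = σγσ⁻¹ maps a to c
  have hδ₁ : oap Q (σ * γ * σ⁻¹) a = c := by
    rw [oap_mul, oap_mul, hσinv, hσa, hσmap]
  -- ρ₁ maps c to a
  obtain ⟨ρ₁, hρ₁2, hρ₁map, _⟩ := exists_oelt Q hanis c a hac.symm
  set b' := oap Q ρ₁ b with hb'
  have hqb' : Q b' = Q (oap Q γ a) := by rw [oap_q, oap_q, hab]
  have hpb' : QuadraticMap.polar ⇑Q a (b' - oap Q γ a) = 0 := by
    have e1 : QuadraticMap.polar ⇑Q a b' = QuadraticMap.polar ⇑Q c b := by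
      rw [← hρ₁map, hb', oap_polar]
    rw [QuadraticMap.polar_sub_right, e1, h1', h2, QuadraticMap.polar_comm, sub_self]
  -- ρ₂ maps b' to γa and fixes a
  obtain ⟨ρ₂, hρ₂2, hρ₂map, hρ₂fix⟩ := exists_oelt Q hanis b' (oap Q γ a) hqb'
  have hρ₂a : oap Q ρ₂ a = a := hρ₂fix a hpb'
  set ρ := ρ₂ * ρ₁ with hρ
  have hρc : oap Q ρ c = a := by rw [hρ, oap_mul, hρ₁map, hρ₂a]
  have hρb : oap Q ρ b = oap Q γ a := by rw [hρ, oap_mul, ← hb', hρ₂map]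
  -- δ₂ = ρ⁻¹γρ maps c to b
  have hδ₂ : oap Q (ρ⁻¹ * γ * ρ) c = b := by
    rw [oap_mul, oap_mul, hρc, ← hρb, oap_inv_oap]
  refine ⟨(ρ⁻¹ * γ * ρ) * (σ * γ * σ⁻¹), ?_, ?_⟩
  · rw [sq]
    refine Set.mul_mem_mul ?_ ?_
    · exact Or.inr ⟨ρ⁻¹, Or.inl (by rw [inv_inv])⟩
    · exact Or.inr ⟨σ, Or.inl rfl⟩
  · show oap Q ((ρ⁻¹ * γ * ρ) * (σ * γ * σ⁻¹)) a = b
    rw [oap_mul, hδ₁, hδ₂]
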